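/- Let a_1,…,a_m, B, K be positive integers with ∑ a_i ≤ B·K. Let the physical network be a 2-tiered star with vertex set {R} ∪ ({1,…,K} × {1,…,B}), where each edge from the root R to a bin subtree has cost 1 and all edges inside a bin subtree have cost 0 (so the shortest-path distance is 0 between two vertices in the same bin subtree, 1 between R and any bin vertex, and 2 between vertices in different bin subtrees). Let the virtual network be a 2-tiered star with root r, and for each i a group consisting of a center g_i with a_i − 1 leaf children, where every edge inside a group has demand 1 and the edge r–g_i has demand 0, together with B·K − ∑ a_i additional leaves attached to r by demand-0 edges. Then the indices {1,…,m} can be partitioned into K subsets each with ∑ a_i at most B if and only if there exists a bijection f from the virtual vertices to the physical vertices with embedding cost ∑_{uv ∈ E(VN)} w(uv) · dist(f(u), f(v)) = 0. (This is the correctness of the reduction showing that wVNE of a 2-star virtual network on a 2-star physical network is NP-complete.) -/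

import Mathlib

open Classical Finset

lemma exists_bijOn_extend {α β : Type*} [DecidableEq α] [DecidableEq β]
    (s : Finset α) (t : Finset β) (s₀ : Finset α) (hsub : s₀ ⊆ s)
    (hcard : s.card = t.card) (h : α → β)
    (hinj : Set.InjOn h ↑s₀) (hmap : ∀ x ∈ s₀, h x ∈ t) :
    ∃ f : α → β, Set.BijOn f ↑s ↑t ∧ ∀ x ∈ s₀, f x = h x := by
  classical
  have himg : s₀.image h ⊆ t := by
    intro y hy; obtain ⟨x, hx, rfl⟩ := Finset.mem_image.1 hy; exact hmap x hx
  have hcard₀ : (s₀.image h).card = s₀.card := Finset.card_image_of_injOn hinj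
  have hcards : (s \ s₀).card = (t \ s₀.image h).card := by
    rw [Finset.card_sdiff_of_subset hsub, Finset.card_sdiff_of_subset himg, hcard, hcard₀]
  let e := Finset.equivOfCardEq hcards
  refine ⟨fun x => if hx : x ∈ s \ s₀ then (e ⟨x, hx⟩).1 else h x,
    ⟨?_, ?_, ?_⟩, ?_⟩
  · intro x hx
    by_cases hx' : x ∈ s \ s₀
    · simp only [hx', dif_pos]
      exact Finset.mem_coe.2 (Finset.sdiff_subset (e ⟨x, hx'⟩).2)
    · have hx₀ : x ∈ s₀ := by
        rcases Finset.mem_sdiff.not.1 hx' with h'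
        push_neg at h'
        exact h' (Finset.mem_coe.1 hx)
      simp only [hx', dif_neg, not_false_iff]
      exact Finset.mem_coe.2 (hmap x hx₀)
  · intro x hx y hy hxy
    by_cases hx' : x ∈ s \ s₀ <;> by_cases hy' : y ∈ s \ s₀
    · simp only [hx', hy', dif_pos] at hxy
      have := e.injective (Subtype.ext hxy)
      exact Subtype.ext_iff.1 this
    · exfalso
      have hy₀ : y ∈ s₀ := by
        have := Finset.mem_sdiff.not.1 hy'; push_neg at this; exact this (Finset.mem_coe.1 hy)
      simp only [hx', hy', dif_pos, dif_neg, not_false_iff] at hxy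
      have h1 : (e ⟨x, hx'⟩ : β) ∈ t \ s₀.image h := (e ⟨x, hx'⟩).2
      rw [hxy] at h1
      exact (Finset.mem_sdiff.1 h1).2 (Finset.mem_image_of_mem h hy₀)
    · exfalso
      have hx₀ : x ∈ s₀ := by
        have := Finset.mem_sdiff.not.1 hx'; push_neg at this; exact this (Finset.mem_coe.1 hx)
      simp only [hx', hy', dif_pos, dif_neg, not_false_iff] at hxy
      have h1 : (e ⟨y, hy'⟩ : β) ∈ t \ s₀.image h := (e ⟨y, hy'⟩).2
      rw [← hxy] at h1
      exact (Finset.mem_sdiff.1 h1).2 (Finset.mem_image_of_mem h hx₀)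
    · have hx₀ : x ∈ s₀ := by
        have := Finset.mem_sdiff.not.1 hx'; push_neg at this; exact this (Finset.mem_coe.1 hx)
      have hy₀ : y ∈ s₀ := by
        have := Finset.mem_sdiff.not.1 hy'; push_neg at this; exact this (Finset.mem_coe.1 hy)
      simp only [hx', hy', dif_neg, not_false_iff] at hxy
      exact hinj (Finset.mem_coe.2 hx₀) (Finset.mem_coe.2 hy₀) hxy
  · intro y hy
    by_cases hy' : y ∈ s₀.image h
    · obtain ⟨x, hx₀, rfl⟩ := Finset.mem_image.1 hy'
      have hx' : x ∉ s \ s₀ := fun hc => (Finset.mem_sdiff.1 hc).2 hx₀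
      exact ⟨x, Finset.mem_coe.2 (hsub hx₀), by simp [hx']⟩
    · have hyt : y ∈ t \ s₀.image h := Finset.mem_sdiff.2 ⟨Finset.mem_coe.1 hy, hy'⟩
      obtain ⟨x, hx⟩ := e.surjective ⟨y, hyt⟩
      refine ⟨(x : α), Finset.mem_coe.2 (Finset.mem_sdiff.1 x.2).1, ?_⟩
      simp only [x.2, dif_pos]
      rw [Subtype.coe_eta]
      exact congrArg Subtype.val hx
  · intro x hx₀
    have hx' : x ∉ s \ s₀ := fun hc => (Finset.mem_sdiff.1 hc).2 hx₀
    simp [hx']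

/-- Correctness of the reduction of bin packing to wVNE of a 2-star
virtual network on a 2-star physical network.

Physical network: root `R = (0,0)` and bin vertices `(k, b)` for `k ∈ 1..K`,
`b ∈ 1..B`; edges from the root cost `1`, edges inside a bin cost `0`, so the
shortest-path distance is `0` inside a bin, `1` from `R` to a bin vertex and `2`
across bins (the `if`-expression below).

Virtual network: root `r = (0,0)`; for each `i ∈ 1..m` a group with center `(i, 0)`
and leaves `(i, j)`, `j ∈ 1..aᵢ − 1`, all group-internal edges of demand `1`, the edge
`r`–center of demand `0`; and `B·K − ∑ aᵢ` extra demand-0 leaves `(m+1, ℓ)`.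
Since demand-0 edges contribute nothing, the embedding cost is the displayed sum.

Bin packing is solvable iff there is an embedding of cost `0`. -/
theorem binPacking_iff_twoStar_on_twoStar_wVNE (m B K : ℕ) (hm : 1 ≤ m) (hB : 1 ≤ B)
    (hK : 1 ≤ K) (a : ℕ → ℕ) (ha : ∀ i ∈ Finset.Icc 1 m, 1 ≤ a i)
    (hsum : ∑ i ∈ Finset.Icc 1 m, a i ≤ B * K) :
    (∃ g : ℕ → ℕ, (∀ i ∈ Finset.Icc 1 m, g i ∈ Finset.Icc 1 K) ∧
        ∀ k ∈ Finset.Icc 1 K,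
          ∑ i ∈ (Finset.Icc 1 m).filter (fun i => g i = k), a i ≤ B) ↔
    (∃ f : ℕ × ℕ → ℕ × ℕ,
      Set.BijOn f
        ({((0 : ℕ), (0 : ℕ))} ∪
          {p : ℕ × ℕ | 1 ≤ p.1 ∧ p.1 ≤ m ∧ p.2 ≤ a p.1 - 1} ∪
          {p : ℕ × ℕ | p.1 = m + 1 ∧ 1 ≤ p.2 ∧
            p.2 ≤ B * K - ∑ i ∈ Finset.Icc 1 m, a i})
        (insert ((0, 0) : ℕ × ℕ) ((Set.Icc 1 K) ×ˢ (Set.Icc 1 B))) ∧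
      ∑ i ∈ Finset.Icc 1 m, ∑ j ∈ Finset.Icc 1 (a i - 1),
        (if (f (i, 0)).1 = (f (i, j)).1 then 0
         else if (f (i, 0)).1 = 0 ∨ (f (i, j)).1 = 0 then 1 else 2) = 0) := by
  classical
  constructor
  · -- forward
    rintro ⟨g, hg1, hg2⟩
    set S := ∑ i ∈ Finset.Icc 1 m, a i with hSdef
    set Vgrp : Finset (ℕ × ℕ) :=
      (Finset.Icc 1 m).biUnion (fun i => {i} ×ˢ Finset.Icc 0 (a i - 1)) with hVgrp
    set Vext : Finset (ℕ × ℕ) := {m + 1} ×ˢ Finset.Icc 1 (B * K - S) with hVext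
    set Vfin : Finset (ℕ × ℕ) := insert (0, 0) (Vgrp ∪ Vext) with hVfin
    set Pfin : Finset (ℕ × ℕ) := insert (0, 0) (Finset.Icc 1 K ×ˢ Finset.Icc 1 B) with hPfin
    have hmemVgrp : ∀ p : ℕ × ℕ, p ∈ Vgrp ↔ 1 ≤ p.1 ∧ p.1 ≤ m ∧ p.2 ≤ a p.1 - 1 := by
      intro p
      rw [hVgrp, Finset.mem_biUnion]
      constructor
      · rintro ⟨i, hi, hp⟩
        rw [Finset.mem_product, Finset.mem_singleton, Finset.mem_Icc] at hp
        rw [Finset.mem_Icc] at hi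
        rw [hp.1]
        exact ⟨hi.1, hi.2, hp.1 ▸ hp.2.2⟩
      · rintro ⟨h1, h2, h3⟩
        exact ⟨p.1, Finset.mem_Icc.2 ⟨h1, h2⟩, by
          rw [Finset.mem_product, Finset.mem_singleton, Finset.mem_Icc]
          exact ⟨rfl, Nat.zero_le _, h3⟩⟩
    have hmemVext : ∀ p : ℕ × ℕ, p ∈ Vext ↔ p.1 = m + 1 ∧ 1 ≤ p.2 ∧ p.2 ≤ B * K - S := by
      intro p
      constructor
      · intro hp
        rw [hVext, Finset.mem_product, Finset.mem_singleton, Finset.mem_Icc] at hp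
        exact ⟨hp.1, hp.2.1, hp.2.2⟩
      · intro hp
        rw [hVext, Finset.mem_product, Finset.mem_singleton, Finset.mem_Icc]
        exact ⟨hp.1, hp.2.1, hp.2.2⟩
    have hVset : ({((0 : ℕ), (0 : ℕ))} ∪
        {p : ℕ × ℕ | 1 ≤ p.1 ∧ p.1 ≤ m ∧ p.2 ≤ a p.1 - 1} ∪
        {p : ℕ × ℕ | p.1 = m + 1 ∧ 1 ≤ p.2 ∧
          p.2 ≤ B * K - ∑ i ∈ Finset.Icc 1 m, a i} : Set (ℕ × ℕ)) = ↑Vfin := by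
      ext p
      simp only [Set.mem_union, Set.mem_singleton_iff, Set.mem_setOf_eq, hVfin,
        Finset.coe_insert, Finset.coe_union, Set.mem_insert_iff, Finset.mem_coe,
        Finset.mem_union, hmemVgrp, hmemVext, ← hSdef]
      constructor
      · rintro ((h | h) | h)
        · exact Or.inl h
        · exact Or.inr (Or.inl h)
        · exact Or.inr (Or.inr h)
      · rintro (h | (h | h))
        · exact Or.inl (Or.inl h)
        · exact Or.inl (Or.inr h)
        · exact Or.inr h
    have hPset : (insert ((0, 0) : ℕ × ℕ) ((Set.Icc 1 K) ×ˢ (Set.Icc 1 B))) = ↑Pfin := by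
      ext p
      simp only [Set.mem_insert_iff, Set.mem_prod, Set.mem_Icc, hPfin, Finset.coe_insert,
        Finset.mem_coe, Finset.mem_insert, Finset.mem_product, Finset.mem_Icc]
    have hdisj : Disjoint Vgrp Vext := by
      rw [Finset.disjoint_left]
      intro p hp hq
      rw [hmemVgrp] at hp
      rw [hmemVext] at hq
      omega
    have hroot_grp : ((0 : ℕ), (0 : ℕ)) ∉ Vgrp ∪ Vext := by
      intro hmem
      rcases Finset.mem_union.1 hmem with h | h
      · rw [hmemVgrp] at h; simp at h
      · rw [hmemVext] at h; simp at h
    have hcardVgrp : Vgrp.card = S := by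
      rw [hVgrp, Finset.card_biUnion]
      · rw [hSdef]
        apply Finset.sum_congr rfl
        intro i hi
        rw [Finset.card_product, Finset.card_singleton, Nat.card_Icc]
        have := ha i hi
        omega
      · intro i _ j _ hij
        rw [Function.onFun, Finset.disjoint_left]
        intro p hp hq
        rw [Finset.mem_product, Finset.mem_singleton] at hp hq
        exact hij (hp.1 ▸ hq.1 ▸ rfl)
    have hcardVext : Vext.card = B * K - S := by
      rw [hVext, Finset.card_product, Finset.card_singleton, Nat.card_Icc]
      omega
    have hcardV : Vfin.card = 1 + B * K := by
      rw [hVfin, Finset.card_insert_of_notMem hroot_grp,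
        Finset.card_union_of_disjoint hdisj, hcardVgrp, hcardVext]
      omega
    have hcardP : Pfin.card = 1 + B * K := by
      rw [hPfin, Finset.card_insert_of_notMem, Finset.card_product, Nat.card_Icc,
        Nat.card_Icc]
      · simp only [Nat.add_sub_cancel]
        ring
      · rw [Finset.mem_product, Finset.mem_Icc]
        omega
    -- the offset function
    set off : ℕ → ℕ :=
      fun i => ∑ i' ∈ (Finset.Icc 1 m).filter (fun i' => i' < i ∧ g i' = g i), a i'
      with hoff
    have key1 : ∀ i ∈ Finset.Icc 1 m, off i + a i ≤ B := by
      intro i hi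
      have hsub : insert i ((Finset.Icc 1 m).filter (fun i' => i' < i ∧ g i' = g i)) ⊆
          (Finset.Icc 1 m).filter (fun i' => g i' = g i) := by
        intro x hx
        rcases Finset.mem_insert.1 hx with rfl | hx
        · exact Finset.mem_filter.2 ⟨hi, rfl⟩
        · rw [Finset.mem_filter] at hx ⊢
          exact ⟨hx.1, hx.2.2⟩
      have hnotin : i ∉ (Finset.Icc 1 m).filter (fun i' => i' < i ∧ g i' = g i) := by
        rw [Finset.mem_filter]
        push_neg
        intro _ h
        exact absurd h (lt_irrefl i)
      have h1 : off i + a i = ∑ i' ∈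
          insert i ((Finset.Icc 1 m).filter (fun i' => i' < i ∧ g i' = g i)), a i' := by
        rw [Finset.sum_insert hnotin, hoff]
        ring
      rw [h1]
      calc ∑ i' ∈ insert i ((Finset.Icc 1 m).filter (fun i' => i' < i ∧ g i' = g i)), a i'
          ≤ ∑ i' ∈ (Finset.Icc 1 m).filter (fun i' => g i' = g i), a i' :=
            Finset.sum_le_sum_of_subset hsub
        _ ≤ B := hg2 (g i) (hg1 i hi)
    have key2 : ∀ i i' : ℕ, i ∈ Finset.Icc 1 m → i' ∈ Finset.Icc 1 m → i < i' →
        g i = g i' → off i + a i ≤ off i' := by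
      intro i i' hi hi' hlt hgg
      have hsub : insert i ((Finset.Icc 1 m).filter (fun x => x < i ∧ g x = g i)) ⊆
          (Finset.Icc 1 m).filter (fun x => x < i' ∧ g x = g i') := by
        intro x hx
        rcases Finset.mem_insert.1 hx with rfl | hx
        · exact Finset.mem_filter.2 ⟨hi, hlt, hgg⟩
        · rw [Finset.mem_filter] at hx ⊢
          exact ⟨hx.1, hx.2.1.trans hlt, hx.2.2.trans hgg⟩
      have hnotin : i ∉ (Finset.Icc 1 m).filter (fun x => x < i ∧ g x = g i) := by
        rw [Finset.mem_filter]
        push_neg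
        intro _ h
        exact absurd h (lt_irrefl i)
      have h1 : off i + a i = ∑ x ∈
          insert i ((Finset.Icc 1 m).filter (fun x => x < i ∧ g x = g i)), a x := by
        rw [Finset.sum_insert hnotin, hoff]
        ring
      rw [h1, hoff]
      exact Finset.sum_le_sum_of_subset hsub
    -- the partial embedding
    set h : ℕ × ℕ → ℕ × ℕ :=
      fun p => if p.1 = 0 then (0, 0) else (g p.1, off p.1 + p.2 + 1) with hh
    set s₀ : Finset (ℕ × ℕ) := insert (0, 0) Vgrp with hs₀
    have hsub₀ : s₀ ⊆ Vfin := by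
      rw [hs₀, hVfin]
      exact Finset.insert_subset_insert _ Finset.subset_union_left
    have hmap₀ : ∀ p ∈ s₀, h p ∈ Pfin := by
      intro p hp
      rcases Finset.mem_insert.1 hp with rfl | hp
      · rw [hh]
        simp only [if_pos]
        exact Finset.mem_insert_self _ _
      · rw [hmemVgrp] at hp
        obtain ⟨h1, h2, h3⟩ := hp
        rw [hh]
        have hne : p.1 ≠ 0 := by omega
        simp only [hne, if_neg, not_false_iff]
        rw [hPfin, Finset.mem_insert]
        right
        rw [Finset.mem_product, Finset.mem_Icc, Finset.mem_Icc]
        have hgk := hg1 p.1 (Finset.mem_Icc.2 ⟨h1, h2⟩)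
        rw [Finset.mem_Icc] at hgk
        have hb := key1 p.1 (Finset.mem_Icc.2 ⟨h1, h2⟩)
        have hap := ha p.1 (Finset.mem_Icc.2 ⟨h1, h2⟩)
        exact ⟨⟨hgk.1, hgk.2⟩, by omega, by omega⟩
    have hinj₀ : Set.InjOn h ↑s₀ := by
      intro p hp q hq hpq
      rw [Finset.mem_coe, hs₀, Finset.mem_insert] at hp hq
      have hgrp1 : ∀ r : ℕ × ℕ, r ∈ Vgrp → (h r).1 = g r.1 ∧ (h r).2 = off r.1 + r.2 + 1 := by
        intro r hr
        rw [hmemVgrp] at hr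
        have : r.1 ≠ 0 := by omega
        simp [hh, this]
      rcases hp with rfl | hp <;> rcases hq with rfl | hq
      · rfl
      · exfalso
        rw [hmemVgrp] at hq
        have hgk := hg1 q.1 (Finset.mem_Icc.2 ⟨hq.1, hq.2.1⟩)
        rw [Finset.mem_Icc] at hgk
        have hq1 : q.1 ≠ 0 := by omega
        rw [hh] at hpq
        simp only [hq1, if_neg, not_false_iff, if_pos] at hpq
        have := congrArg Prod.fst hpq
        simp at this
        omega
      · exfalso
        rw [hmemVgrp] at hp
        have hgk := hg1 p.1 (Finset.mem_Icc.2 ⟨hp.1, hp.2.1⟩)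
        rw [Finset.mem_Icc] at hgk
        have hp1 : p.1 ≠ 0 := by omega
        rw [hh] at hpq
        simp only [hp1, if_neg, not_false_iff, if_pos] at hpq
        have := congrArg Prod.fst hpq
        simp at this
        omega
      · obtain ⟨hpf, hps⟩ := hgrp1 p hp
        obtain ⟨hqf, hqs⟩ := hgrp1 q hq
        rw [hmemVgrp] at hp hq
        have h1 : g p.1 = g q.1 := by
          rw [← hpf, ← hqf, hpq]
        have h2 : off p.1 + p.2 = off q.1 + q.2 := by
          have := congrArg Prod.snd hpq
          rw [hps, hqs] at this
          omega
        have hap := ha p.1 (Finset.mem_Icc.2 ⟨hp.1, hp.2.1⟩)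
        have haq := ha q.1 (Finset.mem_Icc.2 ⟨hq.1, hq.2.1⟩)
        rcases lt_trichotomy p.1 q.1 with hlt | heq | hlt
        · exfalso
          have := key2 p.1 q.1 (Finset.mem_Icc.2 ⟨hp.1, hp.2.1⟩)
            (Finset.mem_Icc.2 ⟨hq.1, hq.2.1⟩) hlt h1
          omega
        · ext
          · exact heq
          · have : off p.1 = off q.1 := by rw [heq]
            omega
        · exfalso
          have := key2 q.1 p.1 (Finset.mem_Icc.2 ⟨hq.1, hq.2.1⟩)
            (Finset.mem_Icc.2 ⟨hp.1, hp.2.1⟩) hlt h1.symm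
          omega
    obtain ⟨f, hfbij, hfeq⟩ := exists_bijOn_extend Vfin Pfin s₀ hsub₀
      (hcardV.trans hcardP.symm) h hinj₀ hmap₀
    refine ⟨f, ?_, ?_⟩
    · rw [hVset, hPset]
      exact hfbij
    · apply Finset.sum_eq_zero
      intro i hi
      apply Finset.sum_eq_zero
      intro j hj
      rw [Finset.mem_Icc] at hi hj
      have hm1 : ((i, 0) : ℕ × ℕ) ∈ s₀ := by
        rw [hs₀, Finset.mem_insert]
        right
        rw [hmemVgrp]
        exact ⟨hi.1, hi.2, Nat.zero_le _⟩
      have hm2 : ((i, j) : ℕ × ℕ) ∈ s₀ := by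
        rw [hs₀, Finset.mem_insert]
        right
        rw [hmemVgrp]
        exact ⟨hi.1, hi.2, hj.2⟩
      have hne : i ≠ 0 := by omega
      rw [hfeq _ hm1, hfeq _ hm2, hh]
      simp [hne]
  · -- reverse
    rintro ⟨f, hbij, hcost⟩
    set V : Set (ℕ × ℕ) :=
      ({((0 : ℕ), (0 : ℕ))} ∪
        {p : ℕ × ℕ | 1 ≤ p.1 ∧ p.1 ≤ m ∧ p.2 ≤ a p.1 - 1} ∪
        {p : ℕ × ℕ | p.1 = m + 1 ∧ 1 ≤ p.2 ∧
          p.2 ≤ B * K - ∑ i ∈ Finset.Icc 1 m, a i}) with hVdef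
    have memV_root : ((0 : ℕ), (0 : ℕ)) ∈ V := by
      rw [hVdef]; left; left; rfl
    have memV_grp : ∀ i j : ℕ, 1 ≤ i → i ≤ m → j ≤ a i - 1 → ((i, j) : ℕ × ℕ) ∈ V := by
      intro i j h1 h2 h3
      rw [hVdef]; left; right; exact ⟨h1, h2, h3⟩
    have hP : ∀ p ∈ V, f p = ((0 : ℕ), (0 : ℕ)) ∨
        (1 ≤ (f p).1 ∧ (f p).1 ≤ K ∧ 1 ≤ (f p).2 ∧ (f p).2 ≤ B) := by
      intro p hp
      have := hbij.mapsTo hp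
      rcases Set.mem_insert_iff.1 this with h | h
      · exact Or.inl h
      · right
        obtain ⟨h1, h2⟩ := h
        exact ⟨h1.1, h1.2, h2.1, h2.2⟩
    have hterm : ∀ i ∈ Finset.Icc 1 m, ∀ j ∈ Finset.Icc 1 (a i - 1),
        (f (i, 0)).1 = (f (i, j)).1 := by
      intro i hi j hj
      by_contra hne
      have h1 := (Finset.sum_eq_zero_iff.1 hcost) i hi
      have h2 := (Finset.sum_eq_zero_iff.1 h1) j hj
      rw [if_neg hne] at h2
      split_ifs at h2 <;> omega
    have hroot_ne : f ((0 : ℕ), (0 : ℕ)) = ((0 : ℕ), (0 : ℕ)) ∨ True := Or.inr trivial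
    -- if some center maps to root, then root maps into a bin
    have habn : ∀ i j : ℕ, 1 ≤ i → i ≤ m → j ≤ a i - 1 → f (i, 0) = ((0 : ℕ), (0 : ℕ)) →
        j = 0 := by
      intro i j h1 h2 h3 hc
      by_contra hj
      have hj1 : 1 ≤ j := Nat.one_le_iff_ne_zero.2 hj
      have heq := hterm i (Finset.mem_Icc.2 ⟨h1, h2⟩) j (Finset.mem_Icc.2 ⟨hj1, h3⟩)
      rw [hc] at heq
      have hmem : ((i, j) : ℕ × ℕ) ∈ V := memV_grp i j h1 h2 h3
      rcases hP _ hmem with h | h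
      · have := hbij.injOn hmem (memV_grp i 0 h1 h2 (Nat.zero_le _)) (h.trans hc.symm)
        exact hj (congrArg Prod.snd this)
      · omega
    refine ⟨fun i => if f (i, 0) = ((0 : ℕ), (0 : ℕ)) then (f ((0 : ℕ), (0 : ℕ))).1
      else (f (i, 0)).1, ?_, ?_⟩
    · intro i hi
      rw [Finset.mem_Icc] at hi ⊢
      have hmem : ((i, 0) : ℕ × ℕ) ∈ V := memV_grp i 0 hi.1 hi.2 (Nat.zero_le _)
      by_cases hc : f (i, 0) = ((0 : ℕ), (0 : ℕ))
      · have hne : f ((0 : ℕ), (0 : ℕ)) ≠ ((0 : ℕ), (0 : ℕ)) := by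
          intro h
          have := hbij.injOn memV_root hmem (h.trans hc.symm)
          have := congrArg Prod.fst this
          simp at this
          omega
        rcases hP _ memV_root with h | h
        · exact absurd h hne
        · simp only [hc, if_pos]
          exact ⟨h.1, h.2.1⟩
      · rcases hP _ hmem with h | h
        · exact absurd h hc
        · simp only [hc, if_neg, not_false_iff]
          exact ⟨h.1, h.2.1⟩
    · intro k hk
      rw [Finset.mem_Icc] at hk
      set gg : ℕ → ℕ := fun i => if f (i, 0) = ((0 : ℕ), (0 : ℕ)) then (f ((0 : ℕ), (0 : ℕ))).1
        else (f (i, 0)).1 with hgg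
      set T : Finset ℕ := (Finset.Icc 1 m).filter (fun i => gg i = k) with hT
      set D : Finset (ℕ × ℕ) := T.biUnion (fun i => {i} ×ˢ Finset.Icc 0 (a i - 1)) with hD
      have hTsub : ∀ i ∈ T, 1 ≤ i ∧ i ≤ m ∧ gg i = k := by
        intro i hi
        rw [hT, Finset.mem_filter, Finset.mem_Icc] at hi
        exact ⟨hi.1.1, hi.1.2, hi.2⟩
      have hcardD : D.card = ∑ i ∈ T, a i := by
        rw [hD, Finset.card_biUnion]
        · apply Finset.sum_congr rfl
          intro i hi
          rw [Finset.card_product, Finset.card_singleton, Nat.card_Icc]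
          have h1 := hTsub i hi
          have := ha i (Finset.mem_Icc.2 ⟨h1.1, h1.2.1⟩)
          omega
        · intro i _ j _ hij
          rw [Function.onFun, Finset.disjoint_left]
          intro p hp hq
          rw [Finset.mem_product, Finset.mem_singleton] at hp hq
          exact hij (hp.1 ▸ hq.1 ▸ rfl)
      have hmemD : ∀ p ∈ D, 1 ≤ p.1 ∧ p.1 ≤ m ∧ gg p.1 = k ∧ p.2 ≤ a p.1 - 1 := by
        intro p hp
        rw [hD, Finset.mem_biUnion] at hp
        obtain ⟨i, hi, hp⟩ := hp
        rw [Finset.mem_product, Finset.mem_singleton, Finset.mem_Icc] at hp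
        obtain ⟨h1, h2, h3⟩ := hTsub i hi
        rw [hp.1]
        exact ⟨h1, h2, h3, hp.1 ▸ hp.2.2⟩
      -- the modified map
      set φ : ℕ × ℕ → ℕ × ℕ := fun p =>
        if f (p.1, 0) = ((0 : ℕ), (0 : ℕ)) then f ((0 : ℕ), (0 : ℕ)) else f p with hφ
      have hmaps : ∀ p ∈ D, φ p ∈ ({k} ×ˢ Finset.Icc 1 B : Finset (ℕ × ℕ)) := by
        intro p hp
        obtain ⟨h1, h2, h3, h4⟩ := hmemD p hp
        rw [Finset.mem_product, Finset.mem_singleton, Finset.mem_Icc]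
        by_cases hc : f (p.1, 0) = ((0 : ℕ), (0 : ℕ))
        · -- p.2 = 0 forced; φ p = f (0,0)
          have hne : f ((0 : ℕ), (0 : ℕ)) ≠ ((0 : ℕ), (0 : ℕ)) := by
            intro h
            have := hbij.injOn memV_root (memV_grp p.1 0 h1 h2 (Nat.zero_le _))
              (h.trans hc.symm)
            have := congrArg Prod.fst this
            simp at this
            omega
          rcases hP _ memV_root with h | h
          · exact absurd h hne
          · rw [hφ]
            simp only [hc, if_pos]
            rw [hgg] at h3
            simp only [hc, if_pos] at h3
            exact ⟨h3, h.2.2.1, h.2.2.2⟩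
        · have hfst : (f (p.1, 0)).1 = k := by
            rw [hgg] at h3
            simp only [hc, if_neg, not_false_iff] at h3
            exact h3
          have hk1 : 1 ≤ k := hk.1
          rcases Nat.eq_zero_or_pos p.2 with h0 | hpos
          · have hpe : p = (p.1, 0) := by
              rw [← h0]
            rw [hφ]
            simp only [hc, if_neg, not_false_iff]
            rw [hpe, hfst]
            refine ⟨rfl, ?_⟩
            rcases hP _ (memV_grp p.1 0 h1 h2 (Nat.zero_le _)) with h | h
            · exact absurd h hc
            · exact ⟨h.2.2.1, h.2.2.2⟩
          · have heq := hterm p.1 (Finset.mem_Icc.2 ⟨h1, h2⟩) p.2 (Finset.mem_Icc.2 ⟨hpos, h4⟩)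
            have hpe : p = (p.1, p.2) := rfl
            rw [hφ]
            simp only [hc, if_neg, not_false_iff]
            rcases hP _ (memV_grp p.1 p.2 h1 h2 h4) with h | h
            · rw [← hpe] at heq
              rw [h] at heq
              simp at heq
              omega
            · rw [← hpe] at heq h
              exact ⟨heq ▸ hfst, h.2.2.1, h.2.2.2⟩
      have hinjφ : Set.InjOn φ ↑D := by
        intro p hp q hq hpq
        obtain ⟨hp1, hp2, hp3, hp4⟩ := hmemD p (Finset.mem_coe.1 hp)
        obtain ⟨hq1, hq2, hq3, hq4⟩ := hmemD q (Finset.mem_coe.1 hq)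
        have hpV : (p : ℕ × ℕ) ∈ V := by
          have := memV_grp p.1 p.2 hp1 hp2 hp4; rwa [Prod.mk.eta] at this
        have hqV : (q : ℕ × ℕ) ∈ V := by
          have := memV_grp q.1 q.2 hq1 hq2 hq4; rwa [Prod.mk.eta] at this
        rw [hφ] at hpq
        by_cases hcp : f (p.1, 0) = ((0 : ℕ), (0 : ℕ)) <;>
          by_cases hcq : f (q.1, 0) = ((0 : ℕ), (0 : ℕ))
        · simp only [hcp, hcq, if_pos] at hpq
          have hp0 := habn p.1 p.2 hp1 hp2 hp4 hcp
          have hq0 := habn q.1 q.2 hq1 hq2 hq4 hcq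
          have := hbij.injOn (memV_grp p.1 0 hp1 hp2 (Nat.zero_le _))
            (memV_grp q.1 0 hq1 hq2 (Nat.zero_le _)) (hcp.trans hcq.symm)
          have h1 := congrArg Prod.fst this
          simp at h1
          ext
          · exact h1
          · rw [hp0, hq0]
        · exfalso
          simp only [hcp, hcq, if_pos, if_neg, not_false_iff] at hpq
          have := hbij.injOn memV_root hqV hpq
          have := congrArg Prod.fst this
          simp at this
          omega
        · exfalso
          simp only [hcp, hcq, if_pos, if_neg, not_false_iff] at hpq
          have := hbij.injOn hpV memV_root hpq
          have := congrArg Prod.fst this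
          simp at this
          omega
        · simp only [hcp, hcq, if_neg, not_false_iff] at hpq
          exact hbij.injOn hpV hqV hpq
      have hle := Finset.card_le_card_of_injOn φ hmaps hinjφ
      rw [hcardD] at hle
      rw [Finset.card_product, Finset.card_singleton, Nat.card_Icc] at hle
      calc ∑ i ∈ (Finset.Icc 1 m).filter (fun i => gg i = k), a i
          = ∑ i ∈ T, a i := by rw [hT]
        _ ≤ B := by omega
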